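/- Let k ≥ 1, d ≥ 1, and for each arm a ∈ {1,…,k} let V^a be a positive definite real d×d matrix, and let θ^a, θ̂^a ∈ ℝ^d and β ≥ 0 satisfy ‖θ^a − θ̂^a‖_{V^a} ≤ √β for all a. Let s ∈ ℝ^d and suppose arm b satisfies the non-exclusion (confidence-interval overlap) condition: for every arm i, ⟨s, θ̂^i⟩ − √β·‖s‖_{(V^i)^{-1}} ≤ ⟨s, θ̂^b⟩ + √β·‖s‖_{(V^b)^{-1}}. Then for every arm a, ⟨s, θ^a⟩ − ⟨s, θ^b⟩ ≤ 2√β·( ‖s‖_{(V^a)^{-1}} + ‖s‖_{(V^b)^{-1}} ) ≤ 4√β · max_c ‖s‖_{(V^c)^{-1}}. -/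

import Mathlib

open Matrix Finset

lemma matrix_cauchy_schwarz {d : ℕ} {W : Matrix (Fin d) (Fin d) ℝ} (hW : W.PosDef)
    (s x : Fin d → ℝ) :
    s ⬝ᵥ x ≤ Real.sqrt (x ⬝ᵥ W.mulVec x) * Real.sqrt (s ⬝ᵥ W⁻¹.mulVec s) := by
  have hherm : Wᵀ = W := by
    rw [← Matrix.conjTranspose_eq_transpose_of_trivial]; exact hW.1
  have hdet : IsUnit W.det := isUnit_iff_ne_zero.mpr hW.det_pos.ne'
  have hWinv : W⁻¹.PosDef := hW.inv
  by_cases hs : s = 0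
  · simp [hs]
  set w : Fin d → ℝ := W⁻¹ *ᵥ s with hw
  have hws : W *ᵥ w = s := by
    rw [hw, Matrix.mulVec_mulVec, Matrix.mul_nonsing_inv _ hdet, Matrix.one_mulVec]
  have symmdot : ∀ u v : Fin d → ℝ, u ⬝ᵥ (W *ᵥ v) = v ⬝ᵥ (W *ᵥ u) := by
    intro u v
    rw [dotProduct_mulVec, ← Matrix.mulVec_transpose, hherm, dotProduct_comm]
  set A : ℝ := x ⬝ᵥ W.mulVec x with hA
  set B : ℝ := s ⬝ᵥ x with hB
  set C : ℝ := s ⬝ᵥ W⁻¹.mulVec s with hC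
  have hCw : w ⬝ᵥ (W *ᵥ w) = C := by rw [hws, dotProduct_comm]
  have hBw : w ⬝ᵥ (W *ᵥ x) = B := by rw [symmdot, hws, dotProduct_comm]
  have hBw' : x ⬝ᵥ (W *ᵥ w) = B := by rw [symmdot]; exact hBw
  have hCpos : 0 < C := hWinv.dotProduct_mulVec_pos hs
  have hA0 : 0 ≤ A := hW.posSemidef.dotProduct_mulVec_nonneg x
  -- quadratic: 0 ≤ (x - (B/C) • w) ⬝ W ⬝ (x - (B/C) • w) = A - B^2/C
  have key : B ^ 2 ≤ A * C := by
    have h := hW.posSemidef.dotProduct_mulVec_nonneg (x - (B / C) • w)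
    simp only [star_trivial] at h
    simp only [Matrix.mulVec_sub, Matrix.mulVec_smul, sub_dotProduct,
      dotProduct_sub, smul_dotProduct, dotProduct_smul, hBw, hBw', hCw,
      smul_eq_mul, ← hA] at h
    have hc : B / C * C = B := div_mul_cancel₀ B hCpos.ne'
    have hbc : B / C * B = B ^ 2 / C := by field_simp
    rw [hc, sub_self, mul_zero, sub_zero, hbc] at h
    have := mul_le_mul_of_nonneg_right (by linarith : B ^ 2 / C ≤ A) hCpos.le
    rw [div_mul_cancel₀ _ hCpos.ne'] at this
    exact this
  calc B ≤ |B| := le_abs_self B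
    _ = Real.sqrt (B ^ 2) := (Real.sqrt_sq_eq_abs B).symm
    _ ≤ Real.sqrt (A * C) := Real.sqrt_le_sqrt key
    _ = Real.sqrt A * Real.sqrt C := Real.sqrt_mul hA0 C

/-- Per-round regret bound from the proof of Theorem 1: if the confidence
bounds hold (`‖θ^a − θ̂^a‖_{V^a} ≤ √β` for all arms) and the played arm `b` is
not excluded by the per-arm confidence intervals, then for every arm `a` the
instantaneous regret of playing `b` is at most
`2√β (‖s‖_{(V^a)⁻¹} + ‖s‖_{(V^b)⁻¹}) ≤ 4√β · max_c ‖s‖_{(V^c)⁻¹}`.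
Here `‖x‖_V = √(xᵀ V x)`. -/
theorem nonexcluded_arm_instantaneous_regret_bound
    (d k : ℕ) (hd : 1 ≤ d) (hk : 1 ≤ k)
    (V : Fin k → Matrix (Fin d) (Fin d) ℝ)
    (hV : ∀ a : Fin k, (V a).PosDef)
    (θ θhat : Fin k → Fin d → ℝ)
    (β : ℝ) (hβ : 0 ≤ β)
    (hconf : ∀ a : Fin k,
      Real.sqrt ((θ a - θhat a) ⬝ᵥ (V a).mulVec (θ a - θhat a)) ≤ Real.sqrt β)
    (s : Fin d → ℝ) (b : Fin k)
    (hnotexcl : ∀ i : Fin k,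
      s ⬝ᵥ θhat i - Real.sqrt β * Real.sqrt (s ⬝ᵥ ((V i)⁻¹).mulVec s) ≤
        s ⬝ᵥ θhat b + Real.sqrt β * Real.sqrt (s ⬝ᵥ ((V b)⁻¹).mulVec s)) :
    ∀ a : Fin k,
      s ⬝ᵥ θ a - s ⬝ᵥ θ b ≤
          2 * Real.sqrt β *
            (Real.sqrt (s ⬝ᵥ ((V a)⁻¹).mulVec s) +
              Real.sqrt (s ⬝ᵥ ((V b)⁻¹).mulVec s)) ∧
        2 * Real.sqrt β *
            (Real.sqrt (s ⬝ᵥ ((V a)⁻¹).mulVec s) +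
              Real.sqrt (s ⬝ᵥ ((V b)⁻¹).mulVec s)) ≤
          4 * Real.sqrt β *
            (Finset.univ.sup' (Finset.univ_nonempty_iff.mpr ⟨⟨0, hk⟩⟩)
              (fun c : Fin k => Real.sqrt (s ⬝ᵥ ((V c)⁻¹).mulVec s))) := by
  intro a
  set N : Fin k → ℝ := fun c => Real.sqrt (s ⬝ᵥ ((V c)⁻¹).mulVec s) with hN
  have hNnn : ∀ c, 0 ≤ N c := fun c => Real.sqrt_nonneg _
  have hsb : 0 ≤ Real.sqrt β := Real.sqrt_nonneg β
  -- deviation bound: s ⬝ᵥ (θ c - θhat c) ≤ √β * N c, both signs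
  have hdev : ∀ (c : Fin k) (x : Fin d → ℝ),
      Real.sqrt (x ⬝ᵥ (V c).mulVec x) ≤ Real.sqrt β →
      s ⬝ᵥ x ≤ Real.sqrt β * N c := by
    intro c x hx
    calc s ⬝ᵥ x ≤ Real.sqrt (x ⬝ᵥ (V c).mulVec x) * N c :=
          matrix_cauchy_schwarz (hV c) s x
      _ ≤ Real.sqrt β * N c := mul_le_mul_of_nonneg_right hx (hNnn c)
  have h1 : s ⬝ᵥ (θ a - θhat a) ≤ Real.sqrt β * N a := hdev a _ (hconf a)
  have h2 : s ⬝ᵥ (θhat b - θ b) ≤ Real.sqrt β * N b := by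
    apply hdev b
    have : (θhat b - θ b) ⬝ᵥ (V b).mulVec (θhat b - θ b)
        = (θ b - θhat b) ⬝ᵥ (V b).mulVec (θ b - θhat b) := by
      have : θhat b - θ b = -(θ b - θhat b) := by ring_nf
      rw [this, Matrix.mulVec_neg, neg_dotProduct, dotProduct_neg, neg_neg]
    rw [this]; exact hconf b
  have h3 := hnotexcl a
  have hda : s ⬝ᵥ (θ a - θhat a) = s ⬝ᵥ θ a - s ⬝ᵥ θhat a := dotProduct_sub s _ _
  have hdb : s ⬝ᵥ (θhat b - θ b) = s ⬝ᵥ θhat b - s ⬝ᵥ θ b := dotProduct_sub s _ _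
  constructor
  · rw [hda] at h1; rw [hdb] at h2
    simp only [hN] at h1 h2 ⊢
    nlinarith [h1, h2, h3]
  · have hmax : ∀ c, N c ≤ Finset.univ.sup'
        (Finset.univ_nonempty_iff.mpr ⟨⟨0, hk⟩⟩) N :=
      fun c => Finset.le_sup' N (Finset.mem_univ c)
    have hsup : 0 ≤ Finset.univ.sup' (Finset.univ_nonempty_iff.mpr ⟨⟨0, hk⟩⟩) N :=
      le_trans (hNnn ⟨0, hk⟩) (hmax ⟨0, hk⟩)
    have := add_le_add (hmax a) (hmax b)
    nlinarith [this, hsb, hsup]
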